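/- Let s satisfy s''(t) = 6 t - 6 s(t)^2 on (0, ∞) with 0 < s(t) < √(3t) for t > 0. Let 0 < a < b, suppose s(t) > √t for all t ∈ (a, b), and s(a) = √a, s(b) = √b. Then b - a > π · (6(1 + √3))^{-1/2} · b^{-1/4}. -/

import Mathlib

open Set Real

set_option maxHeartbeats 1600000 in
theorem oscillation_interval_lower_bound
    (s : ℝ → ℝ)
    (hdiff : ∀ t ∈ Ioi (0 : ℝ), DifferentiableAt ℝ s t ∧ DifferentiableAt ℝ (deriv s) t)
    (heq : ∀ t ∈ Ioi (0 : ℝ), deriv (deriv s) t = 6 * t - 6 * (s t) ^ 2)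
    (hbd : ∀ t : ℝ, 0 < t → 0 < s t ∧ s t < Real.sqrt (3 * t))
    (a b : ℝ) (ha : 0 < a) (hab : a < b)
    (habove : ∀ t ∈ Ioo a b, s t > Real.sqrt t)
    (hsa : s a = Real.sqrt a) (hsb : s b = Real.sqrt b) :
    b - a > π * (6 * (1 + Real.sqrt 3)) ^ (-(1 : ℝ) / 2) * b ^ (-(1 : ℝ) / 4) := by
  have hb : 0 < b := ha.trans hab
  have h3 : (0:ℝ) < Real.sqrt 3 := Real.sqrt_pos.mpr (by norm_num)
  have hA : (0:ℝ) < 6 * (1 + Real.sqrt 3) := by positivity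
  have hsb0 : 0 < Real.sqrt b := Real.sqrt_pos.mpr hb
  set k : ℝ := Real.sqrt (6 * (1 + Real.sqrt 3) * Real.sqrt b) with hk_def
  have hL : (0:ℝ) < 6 * (1 + Real.sqrt 3) * Real.sqrt b := by positivity
  have hk : 0 < k := Real.sqrt_pos.mpr hL
  have hk2 : k ^ 2 = 6 * (1 + Real.sqrt 3) * Real.sqrt b := Real.sq_sqrt hL.le
  -- rewrite the RHS as π / k
  have hRHS : π * (6 * (1 + Real.sqrt 3)) ^ (-(1 : ℝ) / 2) * b ^ (-(1 : ℝ) / 4) = π / k := by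
    have e1 : (6 * (1 + Real.sqrt 3) : ℝ) ^ (-(1 : ℝ) / 2)
        = (Real.sqrt (6 * (1 + Real.sqrt 3)))⁻¹ := by
      rw [show (-(1 : ℝ) / 2) = -(1/2 : ℝ) by norm_num, Real.rpow_neg hA.le,
        ← Real.sqrt_eq_rpow]
    have e2 : b ^ (-(1 : ℝ) / 4) = (Real.sqrt (Real.sqrt b))⁻¹ := by
      rw [show (-(1 : ℝ) / 4) = -(1/4 : ℝ) by norm_num, Real.rpow_neg hb.le]
      congr 1
      rw [Real.sqrt_eq_rpow, Real.sqrt_eq_rpow, ← Real.rpow_mul hb.le]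
      norm_num
    have e3 : k = Real.sqrt (6 * (1 + Real.sqrt 3)) * Real.sqrt (Real.sqrt b) := by
      rw [hk_def, Real.sqrt_mul hA.le]
    rw [e1, e2, e3, div_eq_mul_inv, mul_inv, mul_assoc]
  rw [hRHS]
  by_contra hcon
  push_neg at hcon
  -- so k * (b - a) ≤ π
  have hkba : k * (b - a) ≤ π := by
    rw [mul_comm]
    exact (le_div_iff₀ hk).mp hcon
  -- definitions
  set f : ℝ → ℝ := fun t => s t - Real.sqrt t with hf_def
  set g : ℝ → ℝ := fun t => Real.sin (k * (t - a)) with hg_def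
  set g1 : ℝ → ℝ := fun t => k * Real.cos (k * (t - a)) with hg1_def
  set F1 : ℝ → ℝ := fun t => deriv s t - 1 / (2 * Real.sqrt t) with hF1_def
  set F2 : ℝ → ℝ := fun t => 6 * t - 6 * (s t) ^ 2 + 1 / (4 * (t * Real.sqrt t)) with hF2_def
  set W : ℝ → ℝ := fun t => f t * g1 t - F1 t * g t with hW_def
  -- derivative facts
  have hlin : ∀ t : ℝ, HasDerivAt (fun t => k * (t - a)) k t := by
    intro t
    simpa using ((hasDerivAt_id t).sub_const a).const_mul k
  have hg : ∀ t : ℝ, HasDerivAt g (g1 t) t := by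
    intro t
    have := (Real.hasDerivAt_sin (k * (t - a))).comp t (hlin t)
    refine this.congr_deriv ?_
    simp only [hg1_def]
    ring
  have hg1 : ∀ t : ℝ, HasDerivAt g1 (-(k ^ 2) * g t) t := by
    intro t
    have := ((Real.hasDerivAt_cos (k * (t - a))).comp t (hlin t)).const_mul k
    refine this.congr_deriv ?_
    simp [hg_def]
    ring
  have hf : ∀ t : ℝ, 0 < t → HasDerivAt f (F1 t) t := by
    intro t ht
    exact ((hdiff t ht).1.hasDerivAt).sub (Real.hasDerivAt_sqrt ht.ne')
  have hF1 : ∀ t : ℝ, 0 < t → HasDerivAt F1 (F2 t) t := by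
    intro t ht
    have hst : Real.sqrt t ≠ 0 := (Real.sqrt_pos.mpr ht).ne'
    have hsq : Real.sqrt t ^ 2 = t := Real.sq_sqrt ht.le
    have h1 : HasDerivAt (deriv s) (6 * t - 6 * (s t) ^ 2) t := by
      have := (hdiff t ht).2.hasDerivAt
      rwa [heq t ht] at this
    have h2 : HasDerivAt (fun t : ℝ => 2 * Real.sqrt t) (2 * (1 / (2 * Real.sqrt t))) t :=
      (Real.hasDerivAt_sqrt ht.ne').const_mul 2
    have h3' : HasDerivAt (fun t : ℝ => (2 * Real.sqrt t)⁻¹)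
        (-(2 * (1 / (2 * Real.sqrt t))) / (2 * Real.sqrt t) ^ 2) t :=
      h2.inv (by positivity)
    have h4 : HasDerivAt (fun t : ℝ => 1 / (2 * Real.sqrt t))
        (-(2 * (1 / (2 * Real.sqrt t))) / (2 * Real.sqrt t) ^ 2) t := by
      simpa [one_div] using h3'
    have := h1.sub h4
    refine this.congr_deriv ?_
    rw [hF2_def]
    field_simp
    nlinarith [hsq, Real.sqrt_pos.mpr ht]
  have hW : ∀ t : ℝ, 0 < t → HasDerivAt W (-(g t) * (F2 t + k ^ 2 * f t)) t := by
    intro t ht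
    have := ((hf t ht).mul (hg1 t)).sub ((hF1 t ht).mul (hg t))
    refine this.congr_deriv ?_
    simp only [hg1_def]
    ring
  -- positivity of the bracket on (a,b)
  have hbracket : ∀ t ∈ Ioo a b, 0 < F2 t + k ^ 2 * f t := by
    intro t ht
    have ht0 : 0 < t := ha.trans ht.1
    have hu : 0 < Real.sqrt t := Real.sqrt_pos.mpr ht0
    have hsq : Real.sqrt t ^ 2 = t := Real.sq_sqrt ht0.le
    have hfpos : 0 < f t := sub_pos.mpr (habove t ht)
    have hub : Real.sqrt t ≤ Real.sqrt b := Real.sqrt_le_sqrt (le_of_lt ht.2)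
    have hs3 : s t < Real.sqrt 3 * Real.sqrt t := by
      have := (hbd t ht0).2
      rwa [Real.sqrt_mul (by norm_num : (0:ℝ) ≤ 3)] at this
    have h2 : 0 < (1 + Real.sqrt 3) * Real.sqrt b - (s t + Real.sqrt t) := by
      nlinarith [h3, hub, hs3, hu]
    have hpos : 0 < 1 / (4 * (t * Real.sqrt t)) := by positivity
    have key : F2 t + k ^ 2 * f t
        = 6 * (f t) * ((1 + Real.sqrt 3) * Real.sqrt b - (s t + Real.sqrt t))
          + 1 / (4 * (t * Real.sqrt t)) := by
      simp only [hF2_def, hf_def, hk2]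
      nlinarith [hsq]
    rw [key]
    exact add_pos (mul_pos (mul_pos (by norm_num : (0:ℝ) < 6) hfpos) h2) hpos
  -- g positive on (a,b), nonneg at b
  have hgpos : ∀ t ∈ Ioo a b, 0 < g t := by
    intro t ht
    simp only [hg_def]
    apply Real.sin_pos_of_pos_of_lt_pi
    · have : 0 < t - a := by linarith [ht.1]
      positivity
    · have h1 : k * (t - a) < k * (b - a) := by
        apply mul_lt_mul_of_pos_left _ hk
        linarith [ht.2]
      linarith
  have hgb : 0 ≤ g b := by
    simp only [hg_def]
    apply Real.sin_nonneg_of_nonneg_of_le_pi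
    · have : 0 ≤ b - a := by linarith
      positivity
    · exact hkba
  -- W is strictly decreasing on [a,b]
  have hWanti : StrictAntiOn W (Icc a b) := by
    apply strictAntiOn_of_deriv_neg (convex_Icc a b)
    · intro t ht
      exact ((hW t (lt_of_lt_of_le ha ht.1)).continuousAt).continuousWithinAt
    · intro t ht
      rw [interior_Icc] at ht
      have ht0 : 0 < t := ha.trans ht.1
      rw [(hW t ht0).deriv]
      have h1 := hgpos t ht
      have h2 := hbracket t ht
      nlinarith
  have hWab : W b < W a := hWanti (left_mem_Icc.mpr hab.le) (right_mem_Icc.mpr hab.le) hab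
  -- W a = 0
  have hWa : W a = 0 := by
    simp [hW_def, hf_def, hg_def, hg1_def, hsa]
  -- F1 b ≤ 0
  have hF1b : F1 b ≤ 0 := by
    have hfb : HasDerivAt f (F1 b) b := hf b hb
    have htend : Filter.Tendsto (slope f b) (nhdsWithin b (Iio b)) (nhds (F1 b)) :=
      (hasDerivAt_iff_tendsto_slope.mp hfb).mono_left
        (nhdsWithin_mono b (fun x hx => ne_of_lt hx))
    apply le_of_tendsto htend
    filter_upwards [Ioo_mem_nhdsLT hab] with x hx
    have hfx : 0 < f x := sub_pos.mpr (habove x hx)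
    have hfb0 : f b = 0 := by simp [hf_def, hsb]
    rw [slope_def_field, hfb0]
    apply div_nonpos_of_nonneg_of_nonpos <;> [linarith; linarith [hx.2]]
  -- W b ≥ 0
  have hWb : 0 ≤ W b := by
    have hfb0 : f b = 0 := by simp [hf_def, hsb]
    simp only [hW_def, hfb0, zero_mul, zero_sub]
    have : F1 b * g b ≤ 0 := mul_nonpos_of_nonpos_of_nonneg hF1b hgb
    linarith
  linarith [hWab, hWa, hWb]
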